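/- arXiv:1312.5668 — 3 statements merged into one kernel-verified Lean document; each statement's English description precedes it below -/
import Mathlib

section
/- Let A be an element of GL(2,ℤ) with A² = I, where I is the 2×2 identity matrix. Then A = I, or A = −I, or there exists T ∈ GL(2,ℤ) such that TAT⁻¹ = D or TAT⁻¹ = S, where D is the diagonal matrix with diagonal entries 1, −1 and S is the matrix with rows (0,1) and (1,0). Moreover, the four matrices I, −I, D, S lie in pairwise distinct conjugacy classes of GL(2,ℤ). -/
section Aux

/-- Two integer matrices are conjugate by an explicit pair of mutually inverse
integer matrices. -/
def ConjZ (M N : Matrix (Fin 2) (Fin 2) ℤ) : Prop :=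
  ∃ T T' : Matrix (Fin 2) (Fin 2) ℤ, T * T' = 1 ∧ T' * T = 1 ∧ T * M * T' = N

lemma ConjZ.trans {M N P : Matrix (Fin 2) (Fin 2) ℤ} (h1 : ConjZ M N) (h2 : ConjZ N P) :
    ConjZ M P := by
  obtain ⟨T, T', a1, a2, a3⟩ := h1
  obtain ⟨U, U', b1, b2, b3⟩ := h2
  refine ⟨U * T, T' * U', ?_, ?_, ?_⟩
  · rw [mul_assoc, ← mul_assoc T, a1, one_mul, b1]
  · rw [mul_assoc, ← mul_assoc U', b2, one_mul, a2]
  · rw [← b3, ← a3]; noncomm_ring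

lemma vecStep (a b c v1 v2 : ℤ) (hv : ¬(v1 = 0 ∧ v2 = 0))
    (h1 : a * v1 + b * v2 = v1) (h2 : c * v1 - a * v2 = v2) :
    ∃ p q x y : ℤ, p * y - q * x = 1 ∧ a * p + b * q = p ∧ c * p - a * q = q := by
  set g : ℤ := (Int.gcd v1 v2 : ℤ) with hgdef
  have hg : g ≠ 0 := by
    simp only [hgdef, ne_eq, Int.natCast_eq_zero, Int.gcd_eq_zero_iff]
    exact hv
  obtain ⟨p, hp⟩ : g ∣ v1 := Int.gcd_dvd_left v1 v2
  obtain ⟨q, hq⟩ : g ∣ v2 := Int.gcd_dvd_right v1 v2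
  have hco : IsCoprime p q := by
    rw [Int.isCoprime_iff_gcd_eq_one]
    have hpos : 0 < Int.gcd v1 v2 := by
      rcases Nat.eq_zero_or_pos (Int.gcd v1 v2) with h | h
      · exfalso; apply hg; rw [hgdef, h]; rfl
      · exact h
    have hdiv := Int.gcd_div_gcd_div_gcd hpos
    have hpe : p = v1 / g := by rw [hp, Int.mul_ediv_cancel_left _ hg]
    have hqe : q = v2 / g := by rw [hq, Int.mul_ediv_cancel_left _ hg]
    rw [hpe, hqe, hgdef]
    exact hdiv
  obtain ⟨u, v, huv⟩ := hco
  refine ⟨p, q, -v, u, by linarith, ?_, ?_⟩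
  · have e1 : g * (a * p + b * q) = g * p := by rw [hp, hq] at h1; linarith
    exact mul_left_cancel₀ hg e1
  · have e2 : g * (c * p - a * q) = g * q := by rw [hp, hq] at h2; linarith
    exact mul_left_cancel₀ hg e2

lemma step1 (a b c : ℤ) (habc : a * a + b * c = 1) :
    ∃ p q x y : ℤ, p * y - q * x = 1 ∧ a * p + b * q = p ∧ c * p - a * q = q := by
  by_cases hac : a = -1 ∧ c = 0
  · refine vecStep a b c b (1 - a) ?_ (by ring) (by linear_combination habc)
    rintro ⟨hh1, hh2⟩; omega
  · refine vecStep a b c (1 + a) c ?_ (by linear_combination habc) (by ring)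
    rintro ⟨hh1, hh2⟩; exact hac ⟨by omega, hh2⟩

lemma step2 (a b c : ℤ) (habc : a * a + b * c = 1) :
    ∃ m : ℤ, ConjZ !![a, b; c, -a] !![1, m; 0, -1] := by
  obtain ⟨p, q, x, y, hb, e1, e2⟩ := step1 a b c habc
  refine ⟨y * (a * x + b * y) - x * (c * x - a * y), !![y, -x; -q, p], !![p, x; q, y], ?_, ?_, ?_⟩
  · ext i j
    fin_cases i <;> fin_cases j <;>
      simp [Matrix.mul_apply, Fin.sum_univ_two, Matrix.one_apply] <;> linarith
  · ext i j
    fin_cases i <;> fin_cases j <;>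
      simp [Matrix.mul_apply, Fin.sum_univ_two, Matrix.one_apply] <;> linarith
  · ext i j
    fin_cases i <;> fin_cases j <;> simp [Matrix.mul_apply, Fin.sum_univ_two]
    · linear_combination y * e1 - x * e2 + hb
    · ring
    · linear_combination p * e2 - q * e1
    · linear_combination x * e2 - y * e1 - hb

lemma step3 (m : ℤ) :
    ConjZ !![1, m; 0, -1] !![1, 0; 0, -1] ∨ ConjZ !![1, m; 0, -1] !![1, 1; 0, -1] := by
  rcases Int.even_or_odd m with ⟨k, hk⟩ | ⟨k, hk⟩
  · left
    refine ⟨!![1, k; 0, 1], !![1, -k; 0, 1], ?_, ?_, ?_⟩ <;>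
      · ext i j
        fin_cases i <;> fin_cases j <;>
          simp [Matrix.mul_apply, Fin.sum_univ_two, Matrix.one_apply] <;> omega
  · right
    refine ⟨!![1, k; 0, 1], !![1, -k; 0, 1], ?_, ?_, ?_⟩ <;>
      · ext i j
        fin_cases i <;> fin_cases j <;>
          simp [Matrix.mul_apply, Fin.sum_univ_two, Matrix.one_apply] <;> omega

lemma step4 : ConjZ !![1, 1; 0, -1] !![0, 1; 1, 0] := by
  refine ⟨!![1, 0; 1, 1], !![1, 0; -1, 1], ?_, ?_, ?_⟩ <;>
    · ext i j
      fin_cases i <;> fin_cases j <;>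
        simp [Matrix.mul_apply, Fin.sum_univ_two, Matrix.one_apply]

lemma keyLemma (M : Matrix (Fin 2) (Fin 2) ℤ) (h : M * M = 1) :
    M = 1 ∨ M = -1 ∨ ConjZ M !![1, 0; 0, -1] ∨ ConjZ M !![0, 1; 1, 0] := by
  have hM := Matrix.eta_fin_two M
  set a := M 0 0 with ha; set b := M 0 1 with hbv; set c := M 1 0 with hcv
  set d := M 1 1 with hdv
  have e00 : a * a + b * c = 1 := by
    have := congrFun (congrFun h 0) 0
    simpa [Matrix.mul_apply, Fin.sum_univ_two, Matrix.one_apply] using this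
  have e01 : a * b + b * d = 0 := by
    have := congrFun (congrFun h 0) 1
    simpa [Matrix.mul_apply, Fin.sum_univ_two, Matrix.one_apply, mul_comm] using this
  have e10 : c * a + d * c = 0 := by
    have := congrFun (congrFun h 1) 0
    simpa [Matrix.mul_apply, Fin.sum_univ_two, Matrix.one_apply, mul_comm] using this
  by_cases had : a + d = 0
  · have hdd : d = -a := by omega
    rw [hM, hdd]
    obtain ⟨m, hm⟩ := step2 a b c e00
    rcases step3 m with h3 | h3
    · exact Or.inr (Or.inr (Or.inl (hm.trans h3)))
    · exact Or.inr (Or.inr (Or.inr ((hm.trans h3).trans step4)))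
  · have hb0 : b = 0 := by
      rcases mul_eq_zero.mp (show b * (a + d) = 0 by linear_combination e01) with h' | h'
      · exact h'
      · exact absurd h' had
    have hc0 : c = 0 := by
      rcases mul_eq_zero.mp (show c * (a + d) = 0 by linear_combination e10) with h' | h'
      · exact h'
      · exact absurd h' had
    have ha2 : a * a = 1 := by rw [hb0] at e00; linarith
    have e11 : c * b + d * d = 1 := by
      have := congrFun (congrFun h 1) 1
      simpa [Matrix.mul_apply, Fin.sum_univ_two, Matrix.one_apply] using this
    have hd2 : d * d = 1 := by rw [hc0] at e11; linarith
    rcases mul_self_eq_one_iff.mp ha2 with ha1 | ha1 <;>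
      rcases mul_self_eq_one_iff.mp hd2 with hd1 | hd1
    · left; rw [hM, ha1, hd1, hb0, hc0]; decide
    · omega
    · omega
    · right; left; rw [hM, ha1, hd1, hb0, hc0]; decide

end Aux

/-- The diagonal matrix `diag(1, -1)` as an element of `GL(2, ℤ)`. -/
def Dmat : Matrix.GeneralLinearGroup (Fin 2) ℤ :=
  ⟨!![1, 0; 0, -1], !![1, 0; 0, -1], by decide, by decide⟩

/-- The matrix with rows `(0,1)` and `(1,0)` as an element of `GL(2, ℤ)`. -/
def Smat : Matrix.GeneralLinearGroup (Fin 2) ℤ :=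
  ⟨!![0, 1; 1, 0], !![0, 1; 1, 0], by decide, by decide⟩

section Aux2

lemma conj_neg_one {a : Matrix.GeneralLinearGroup (Fin 2) ℤ} (h : IsConj (-1) a) : a = -1 := by
  obtain ⟨c, hc⟩ := h
  have h1 : (↑c : Matrix.GeneralLinearGroup (Fin 2) ℤ) * -1 = a * ↑c := hc
  have h2 : a * (↑c : Matrix.GeneralLinearGroup (Fin 2) ℤ) = -1 * ↑c := by
    rw [← h1, mul_neg_one, neg_one_mul]
  exact mul_right_cancel h2

lemma conjz_to_gl {A : Matrix.GeneralLinearGroup (Fin 2) ℤ}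
    {N : Matrix.GeneralLinearGroup (Fin 2) ℤ} (h : ConjZ A.val N.val) :
    ∃ T : Matrix.GeneralLinearGroup (Fin 2) ℤ, T * A * T⁻¹ = N := by
  obtain ⟨T, T', h1, h2, h3⟩ := h
  refine ⟨⟨T, T', h1, h2⟩, ?_⟩
  refine Units.ext ?_
  simp only [Units.val_mul]
  exact h3

end Aux2

theorem order_two_in_GL2Z_classification (A : Matrix.GeneralLinearGroup (Fin 2) ℤ)
    (hA : A ^ 2 = 1) :
    (A = 1 ∨ A = -1 ∨
      ∃ T : Matrix.GeneralLinearGroup (Fin 2) ℤ, T * A * T⁻¹ = Dmat ∨ T * A * T⁻¹ = Smat) ∧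
    (¬ IsConj (1 : Matrix.GeneralLinearGroup (Fin 2) ℤ) (-1) ∧
     ¬ IsConj (1 : Matrix.GeneralLinearGroup (Fin 2) ℤ) Dmat ∧
     ¬ IsConj (1 : Matrix.GeneralLinearGroup (Fin 2) ℤ) Smat ∧
     ¬ IsConj (-1 : Matrix.GeneralLinearGroup (Fin 2) ℤ) Dmat ∧
     ¬ IsConj (-1 : Matrix.GeneralLinearGroup (Fin 2) ℤ) Smat ∧
     ¬ IsConj Dmat Smat) := by
  constructor
  · have hval : (A : Matrix (Fin 2) (Fin 2) ℤ) * A = 1 := by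
      have := congrArg Units.val hA
      simpa [pow_two] using this
    rcases keyLemma A.val hval with h | h | h | h
    · exact Or.inl (Units.ext h)
    · refine Or.inr (Or.inl (Units.ext ?_))
      simpa using h
    · refine Or.inr (Or.inr ?_)
      obtain ⟨T, hT⟩ := conjz_to_gl (N := Dmat) h
      exact ⟨T, Or.inl hT⟩
    · refine Or.inr (Or.inr ?_)
      obtain ⟨T, hT⟩ := conjz_to_gl (N := Smat) h
      exact ⟨T, Or.inr hT⟩
  · refine ⟨?_, ?_, ?_, ?_, ?_, ?_⟩
    · intro h
      have := isConj_one_right.mp h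
      have h2 : (-1 : Matrix (Fin 2) (Fin 2) ℤ) = 1 := by
        simpa using congrArg Units.val this
      exact absurd h2 (by decide)
    · intro h
      have := isConj_one_right.mp h
      exact absurd (congrArg Units.val this) (by decide)
    · intro h
      have := isConj_one_right.mp h
      exact absurd (congrArg Units.val this) (by decide)
    · intro h
      have := conj_neg_one h
      have h2 : (!![1, 0; 0, -1] : Matrix (Fin 2) (Fin 2) ℤ) = -1 := by
        have h3 := congrArg Units.val this
        rw [Units.val_neg, Units.val_one] at h3
        exact h3
      exact absurd h2 (by decide)
    · intro h
      have := conj_neg_one h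
      have h2 : (!![0, 1; 1, 0] : Matrix (Fin 2) (Fin 2) ℤ) = -1 := by
        have h3 := congrArg Units.val this
        rw [Units.val_neg, Units.val_one] at h3
        exact h3
      exact absurd h2 (by decide)
    · intro h
      have h2 := (Units.map ((Int.castRingHom (ZMod 2)).mapMatrix).toMonoidHom).map_isConj h
      have hD : (Units.map ((Int.castRingHom (ZMod 2)).mapMatrix).toMonoidHom) Dmat = 1 := by
        refine Units.ext ?_
        show (!![1,0;0,-1] : Matrix (Fin 2) (Fin 2) ℤ).map Int.cast
          = (1 : Matrix (Fin 2) (Fin 2) (ZMod 2))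
        decide
      rw [hD] at h2
      have hs := isConj_one_right.mp h2
      have : (!![0,1;1,0] : Matrix (Fin 2) (Fin 2) ℤ).map Int.cast
          = (1 : Matrix (Fin 2) (Fin 2) (ZMod 2)) := congrArg Units.val hs
      exact absurd this (by decide)
end

section
/- Let Γ be the Heisenberg group, let Z(Γ) be its center, and let π : Γ → Γ/Z(Γ) be the canonical projection. Then for every automorphism γ of the quotient group Γ/Z(Γ) there exists an automorphism φ of Γ such that π(φ(g)) = γ(π(g)) for all g ∈ Γ; that is, the natural homomorphism Aut(Γ) → Aut(Γ/Z(Γ)) is surjective. -/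
/-- The commutator `g⁻¹h⁻¹gh` used in the paper's convention. -/
def commS {G : Type*} [Group G] (g h : G) : G := g⁻¹ * h⁻¹ * g * h

/-- Relations of the Heisenberg group: `[[x,y],x] = [[x,y],y] = 1`. -/
def heisRels : Set (FreeGroup (Fin 2)) :=
  { commS (commS (FreeGroup.of 0) (FreeGroup.of 1)) (FreeGroup.of 0),
    commS (commS (FreeGroup.of 0) (FreeGroup.of 1)) (FreeGroup.of 1) }

/-- The Heisenberg group, presented by `x, y` with `[[x,y],x] = [[x,y],y] = 1`. -/
abbrev Heisenberg : Type := PresentedGroup heisRels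

/-- The generator `x` of the Heisenberg group. -/
def Hx : Heisenberg := PresentedGroup.of 0

/-- The generator `y` of the Heisenberg group. -/
def Hy : Heisenberg := PresentedGroup.of 1

/-- The central element `λ = [x,y]`. -/
def Hlam : Heisenberg := commS Hx Hy

/-- A pair of elements of a group is free if the induced map from the free group
on two generators is injective. -/
def IsFreePair {G : Type*} [Group G] (u v : G) : Prop :=
  Function.Injective ⇑(FreeGroup.lift (fun b : Bool => if b then u else v) : FreeGroup Bool →* G)

namespace HeisAux

lemma map_commS {G H : Type*} [Group G] [Group H] (φ : G →* H) (a b : G) :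
    φ (commS a b) = commS (φ a) (φ b) := by
  simp [commS]

lemma commS_eq_one_iff {G : Type*} [Group G] {a b : G} :
    commS a b = 1 ↔ a * b = b * a := by
  unfold commS
  constructor
  · intro h
    have := congrArg (fun z => b * (a * z)) h
    simpa [mul_assoc] using this
  · intro h
    rw [mul_assoc, mul_assoc, h]
    group

lemma rel_eq_one {r : FreeGroup (Fin 2)} (hr : r ∈ heisRels) :
    (QuotientGroup.mk r : Heisenberg) = 1 :=
  (QuotientGroup.eq_one_iff r).mpr (Subgroup.subset_normalClosure hr)

lemma mk_commS (a b : FreeGroup (Fin 2)) :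
    (QuotientGroup.mk (commS a b) : Heisenberg)
      = commS (QuotientGroup.mk a) (QuotientGroup.mk b) := by
  simp [commS]

lemma Hx_def : Hx = QuotientGroup.mk (FreeGroup.of 0) := rfl
lemma Hy_def : Hy = QuotientGroup.mk (FreeGroup.of 1) := rfl

lemma Hlam_mk : Hlam = QuotientGroup.mk (commS (FreeGroup.of 0) (FreeGroup.of 1)) := by
  rw [Hlam, mk_commS]; rfl

lemma commS_lam_x : commS Hlam Hx = 1 := by
  rw [Hlam_mk, Hx_def]
  exact (mk_commS _ _).symm.trans (rel_eq_one (Set.mem_insert _ _))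

lemma commS_lam_y : commS Hlam Hy = 1 := by
  rw [Hlam_mk, Hy_def]
  exact (mk_commS _ _).symm.trans (rel_eq_one (Set.mem_insert_iff.mpr (Or.inr rfl)))

lemma commute_lam_x : Commute Hlam Hx := commS_eq_one_iff.mp commS_lam_x
lemma commute_lam_y : Commute Hlam Hy := commS_eq_one_iff.mp commS_lam_y

lemma commute_lam (g : Heisenberg) : Commute Hlam g := by
  have hg : g ∈ Subgroup.closure (Set.range (PresentedGroup.of : Fin 2 → Heisenberg)) := by
    rw [PresentedGroup.closure_range_of]; trivial
  induction hg using Subgroup.closure_induction with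
  | mem z hz =>
      obtain ⟨i, rfl⟩ := hz
      fin_cases i
      · exact commute_lam_x
      · exact commute_lam_y
  | one => exact Commute.one_right _
  | mul _ _ _ _ h1 h2 => exact h1.mul_right h2
  | inv _ _ h => exact h.inv_right

lemma lam_mem_center : Hlam ∈ Subgroup.center Heisenberg :=
  Subgroup.mem_center_iff.mpr fun g => (commute_lam g).symm.eq

lemma zlam_comm (k : ℤ) (g : Heisenberg) : Hlam ^ k * g = g * Hlam ^ k :=
  ((commute_lam g).zpow_left k).eq

lemma yx : Hy * Hx = Hx * Hy * Hlam⁻¹ := by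
  unfold Hlam commS; group

lemma xy : Hx * Hy = Hy * Hx * Hlam := by
  rw [yx]; group

lemma yxinv : Hy * Hx⁻¹ = Hx⁻¹ * Hy * Hlam := by
  have h : Hx * Hy * Hx⁻¹ = Hy * Hlam := by
    rw [xy, mul_assoc, mul_assoc, (commute_lam Hx⁻¹).eq]
    group
  calc Hy * Hx⁻¹ = Hx⁻¹ * (Hx * Hy * Hx⁻¹) := by group
  _ = Hx⁻¹ * (Hy * Hlam) := by rw [h]
  _ = Hx⁻¹ * Hy * Hlam := by rw [mul_assoc]

/-- Key commutation: `y * x^a = x^a * y * λ^(-a)`. -/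
lemma y_xpow (a : ℤ) : Hy * Hx ^ a = Hx ^ a * Hy * Hlam ^ (-a) := by
  induction a using Int.induction_on with
  | zero => simp
  | succ k ih =>
      have hx1 : Hx ^ ((k : ℤ) + 1) = Hx ^ (k : ℤ) * Hx := by rw [zpow_add_one]
      rw [hx1]
      calc Hy * (Hx ^ (k:ℤ) * Hx) = (Hy * Hx ^ (k:ℤ)) * Hx := by rw [mul_assoc]
      _ = Hx ^ (k:ℤ) * Hy * Hlam ^ (-(k:ℤ)) * Hx := by rw [ih]
      _ = Hx ^ (k:ℤ) * Hy * (Hx * Hlam ^ (-(k:ℤ))) := by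
            rw [mul_assoc (Hx ^ (k:ℤ) * Hy), zlam_comm]
      _ = Hx ^ (k:ℤ) * (Hy * Hx) * Hlam ^ (-(k:ℤ)) := by group
      _ = Hx ^ (k:ℤ) * (Hx * Hy * Hlam⁻¹) * Hlam ^ (-(k:ℤ)) := by rw [yx]
      _ = Hx ^ (k:ℤ) * Hx * Hy * (Hlam⁻¹ * Hlam ^ (-(k:ℤ))) := by group
      _ = (Hx ^ (k:ℤ) * Hx) * Hy * Hlam ^ (-((k:ℤ)+1)) := by
            congr 1
            group
  | pred k ih =>
      have hx1 : Hx ^ (-(k : ℤ) - 1) = Hx ^ (-(k : ℤ)) * Hx⁻¹ := by group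
      rw [hx1]
      have ih' : Hy * Hx ^ (-(k:ℤ)) = Hx ^ (-(k:ℤ)) * Hy * Hlam ^ ((k:ℤ)) := by
        rw [ih]; ring_nf
      calc Hy * (Hx ^ (-(k:ℤ)) * Hx⁻¹) = (Hy * Hx ^ (-(k:ℤ))) * Hx⁻¹ := by rw [mul_assoc]
      _ = Hx ^ (-(k:ℤ)) * Hy * Hlam ^ ((k:ℤ)) * Hx⁻¹ := by rw [ih']
      _ = Hx ^ (-(k:ℤ)) * Hy * (Hx⁻¹ * Hlam ^ ((k:ℤ))) := by
            rw [mul_assoc (Hx ^ (-(k:ℤ)) * Hy), zlam_comm]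
      _ = Hx ^ (-(k:ℤ)) * (Hy * Hx⁻¹) * Hlam ^ ((k:ℤ)) := by group
      _ = Hx ^ (-(k:ℤ)) * (Hx⁻¹ * Hy * Hlam) * Hlam ^ ((k:ℤ)) := by rw [yxinv]
      _ = (Hx ^ (-(k:ℤ)) * Hx⁻¹) * Hy * (Hlam * Hlam ^ ((k:ℤ))) := by group
      _ = (Hx ^ (-(k:ℤ)) * Hx⁻¹) * Hy * Hlam ^ (-(-(k:ℤ)-1)) := by
            congr 1
            group

/-- `y⁻¹ * x^a = x^a * y⁻¹ * λ^a`. -/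
lemma yinv_xpow (a : ℤ) : Hy⁻¹ * Hx ^ a = Hx ^ a * Hy⁻¹ * Hlam ^ a := by
  have hc : Hx ^ (-a) * Hy * Hx ^ a = Hy * Hlam ^ (-a) := by
    rw [mul_assoc, y_xpow a]
    group
  have hcinv : Hx ^ (-a) * Hy⁻¹ * Hx ^ a = Hy⁻¹ * Hlam ^ a := by
    have h1 : (Hx ^ (-a) * Hy * Hx ^ a)⁻¹ = (Hy * Hlam ^ (-a))⁻¹ := by rw [hc]
    calc Hx ^ (-a) * Hy⁻¹ * Hx ^ a = (Hx ^ (-a) * Hy * Hx ^ a)⁻¹ := by group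
    _ = (Hy * Hlam ^ (-a))⁻¹ := h1
    _ = Hlam ^ a * Hy⁻¹ := by group
    _ = Hy⁻¹ * Hlam ^ a := zlam_comm a Hy⁻¹
  calc Hy⁻¹ * Hx ^ a = Hx ^ a * (Hx ^ (-a) * Hy⁻¹ * Hx ^ a) := by group
  _ = Hx ^ a * (Hy⁻¹ * Hlam ^ a) := by rw [hcinv]
  _ = Hx ^ a * Hy⁻¹ * Hlam ^ a := by rw [mul_assoc]

lemma ypow_xpow (a b : ℤ) :
    Hy ^ b * Hx ^ a = Hx ^ a * Hy ^ b * Hlam ^ (-(a * b)) := by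
  induction b using Int.induction_on with
  | zero => simp
  | succ k ih =>
      have hy1 : Hy ^ ((k : ℤ) + 1) = Hy ^ (k : ℤ) * Hy := by rw [zpow_add_one]
      rw [hy1]
      calc Hy ^ (k:ℤ) * Hy * Hx ^ a = Hy ^ (k:ℤ) * (Hy * Hx ^ a) := by rw [mul_assoc]
      _ = Hy ^ (k:ℤ) * (Hx ^ a * Hy * Hlam ^ (-a)) := by rw [y_xpow]
      _ = (Hy ^ (k:ℤ) * Hx ^ a) * Hy * Hlam ^ (-a) := by group
      _ = Hx ^ a * Hy ^ (k:ℤ) * Hlam ^ (-(a * k)) * Hy * Hlam ^ (-a) := by rw [ih]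
      _ = Hx ^ a * Hy ^ (k:ℤ) * (Hy * Hlam ^ (-(a * k))) * Hlam ^ (-a) := by
            rw [mul_assoc (Hx ^ a * Hy ^ (k:ℤ)), zlam_comm]
      _ = Hx ^ a * (Hy ^ (k:ℤ) * Hy) * (Hlam ^ (-(a * k)) * Hlam ^ (-a)) := by group
      _ = Hx ^ a * (Hy ^ (k:ℤ) * Hy) * Hlam ^ (-(a*k) + -a) := by rw [← zpow_add]
      _ = Hx ^ a * Hy ^ ((k:ℤ)+1) * Hlam ^ (-(a * ((k:ℤ)+1))) := by
            rw [← hy1]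
            have h9 : -(a*(k:ℤ)) + -a = -(a * ((k:ℤ)+1)) := by ring
            rw [h9]
  | pred k ih =>
      have hy1 : Hy ^ (-(k : ℤ) - 1) = Hy ^ (-(k : ℤ)) * Hy⁻¹ := by group
      have ih' : Hy ^ (-(k:ℤ)) * Hx ^ a = Hx ^ a * Hy ^ (-(k:ℤ)) * Hlam ^ (a * k) := by
        rw [ih]; ring_nf
      calc Hy ^ (-(k:ℤ) - 1) * Hx ^ a = Hy ^ (-(k:ℤ)) * (Hy⁻¹ * Hx ^ a) := by
            rw [hy1, mul_assoc]
      _ = Hy ^ (-(k:ℤ)) * (Hx ^ a * Hy⁻¹ * Hlam ^ a) := by rw [yinv_xpow]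
      _ = (Hy ^ (-(k:ℤ)) * Hx ^ a) * Hy⁻¹ * Hlam ^ a := by group
      _ = Hx ^ a * Hy ^ (-(k:ℤ)) * Hlam ^ (a * k) * Hy⁻¹ * Hlam ^ a := by rw [ih']
      _ = Hx ^ a * Hy ^ (-(k:ℤ)) * (Hy⁻¹ * Hlam ^ (a * k)) * Hlam ^ a := by
            rw [mul_assoc (Hx ^ a * Hy ^ (-(k:ℤ))), zlam_comm]
      _ = Hx ^ a * (Hy ^ (-(k:ℤ)) * Hy⁻¹) * (Hlam ^ (a * k) * Hlam ^ a) := by group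
      _ = Hx ^ a * (Hy ^ (-(k:ℤ)) * Hy⁻¹) * Hlam ^ (a*k + a) := by rw [← zpow_add]
      _ = Hx ^ a * Hy ^ (-(k:ℤ)-1) * Hlam ^ (-(a * (-(k:ℤ)-1))) := by
            have h9 : a*(k:ℤ) + a = -(a * (-(k:ℤ)-1)) := by ring
            rw [h9]
            group

/-! ### A concrete model of the Heisenberg group -/

@[ext] structure H3 : Type where
  a : ℤ
  b : ℤ
  c : ℤ

instance : Mul H3 := ⟨fun u v => ⟨u.a + v.a, u.b + v.b, u.c + v.c - v.a * u.b⟩⟩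
instance : One H3 := ⟨⟨0, 0, 0⟩⟩
instance : Inv H3 := ⟨fun u => ⟨-u.a, -u.b, -u.c - u.a * u.b⟩⟩

@[simp] lemma H3_mul_a (u v : H3) : (u * v).a = u.a + v.a := rfl
@[simp] lemma H3_mul_b (u v : H3) : (u * v).b = u.b + v.b := rfl
@[simp] lemma H3_mul_c (u v : H3) : (u * v).c = u.c + v.c - v.a * u.b := rfl
@[simp] lemma H3_one_a : (1 : H3).a = 0 := rfl
@[simp] lemma H3_one_b : (1 : H3).b = 0 := rfl
@[simp] lemma H3_one_c : (1 : H3).c = 0 := rfl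
@[simp] lemma H3_inv_a (u : H3) : u⁻¹.a = -u.a := rfl
@[simp] lemma H3_inv_b (u : H3) : u⁻¹.b = -u.b := rfl
@[simp] lemma H3_inv_c (u : H3) : u⁻¹.c = -u.c - u.a * u.b := rfl

instance : Group H3 where
  mul_assoc u v w := by ext <;> simp <;> ring
  one_mul u := by ext <;> simp
  mul_one u := by ext <;> simp
  inv_mul_cancel u := by ext <;> simp <;> ring

def MX : H3 := ⟨1, 0, 0⟩
def MY : H3 := ⟨0, 1, 0⟩
def ML : H3 := ⟨0, 0, 1⟩

lemma ML_zpow (c : ℤ) : ML ^ c = ⟨0, 0, c⟩ := by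
  induction c using Int.induction_on with
  | zero => ext <;> simp
  | succ k ih => rw [zpow_add_one, ih]; ext <;> simp [ML]
  | pred k ih =>
      rw [zpow_sub_one, ih]
      ext <;> simp [ML] <;> omega

lemma Frel : ∀ r ∈ heisRels, FreeGroup.lift (![MX, MY] : Fin 2 → H3) r = 1 := by
  intro r hr
  rcases Set.mem_insert_iff.mp hr with rfl | hr
  · rw [map_commS, map_commS]
    simp only [FreeGroup.lift_apply_of, Matrix.cons_val_zero, Matrix.cons_val_one, Matrix.head_cons]
    ext <;> simp [commS, MX, MY] <;> ring
  · rw [Set.mem_singleton_iff.mp hr, map_commS, map_commS]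
    simp only [FreeGroup.lift_apply_of, Matrix.cons_val_zero, Matrix.cons_val_one, Matrix.head_cons]
    ext <;> simp [commS, MX, MY] <;> ring

/-- The canonical homomorphism from the presented Heisenberg group to the model. -/
def Fh : Heisenberg →* H3 := PresentedGroup.toGroup Frel

lemma Fh_x : Fh Hx = MX := PresentedGroup.toGroup.of Frel
lemma Fh_y : Fh Hy = MY := PresentedGroup.toGroup.of Frel

lemma Fh_lam : Fh Hlam = ML := by
  rw [Hlam, map_commS, Fh_x, Fh_y]
  ext <;> simp [commS, MX, MY, ML]

/-- The inverse homomorphism from the model to the presented group. -/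
def iota : H3 →* Heisenberg where
  toFun u := Hx ^ u.a * Hy ^ u.b * Hlam ^ u.c
  map_one' := by simp
  map_mul' u v := by
    show Hx ^ (u.a + v.a) * Hy ^ (u.b + v.b) * Hlam ^ (u.c + v.c - v.a * u.b) = _
    symm
    calc (Hx ^ u.a * Hy ^ u.b * Hlam ^ u.c) * (Hx ^ v.a * Hy ^ v.b * Hlam ^ v.c)
        = Hx ^ u.a * Hy ^ u.b * (Hlam ^ u.c * Hx ^ v.a) * Hy ^ v.b * Hlam ^ v.c := by group
      _ = Hx ^ u.a * Hy ^ u.b * (Hx ^ v.a * Hlam ^ u.c) * Hy ^ v.b * Hlam ^ v.c := by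
            rw [zlam_comm]
      _ = Hx ^ u.a * (Hy ^ u.b * Hx ^ v.a) * (Hlam ^ u.c * Hy ^ v.b) * Hlam ^ v.c := by group
      _ = Hx ^ u.a * (Hy ^ u.b * Hx ^ v.a) * (Hy ^ v.b * Hlam ^ u.c) * Hlam ^ v.c := by
            rw [zlam_comm]
      _ = Hx ^ u.a * (Hx ^ v.a * Hy ^ u.b * Hlam ^ (-(v.a * u.b))) * (Hy ^ v.b * Hlam ^ u.c)
            * Hlam ^ v.c := by rw [ypow_xpow]
      _ = (Hx ^ u.a * Hx ^ v.a) * Hy ^ u.b * (Hlam ^ (-(v.a * u.b)) * Hy ^ v.b)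
            * (Hlam ^ u.c * Hlam ^ v.c) := by group
      _ = (Hx ^ u.a * Hx ^ v.a) * Hy ^ u.b * (Hy ^ v.b * Hlam ^ (-(v.a * u.b)))
            * (Hlam ^ u.c * Hlam ^ v.c) := by rw [zlam_comm]
      _ = (Hx ^ u.a * Hx ^ v.a) * (Hy ^ u.b * Hy ^ v.b)
            * (Hlam ^ (-(v.a * u.b)) * (Hlam ^ u.c * Hlam ^ v.c)) := by group
      _ = Hx ^ (u.a + v.a) * Hy ^ (u.b + v.b) * Hlam ^ (-(v.a * u.b) + (u.c + v.c)) := by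
            rw [← zpow_add, ← zpow_add, ← zpow_add, ← zpow_add]
      _ = Hx ^ (u.a + v.a) * Hy ^ (u.b + v.b) * Hlam ^ (u.c + v.c - v.a * u.b) := by
            have h9 : -(v.a * u.b) + (u.c + v.c) = u.c + v.c - v.a * u.b := by ring
            rw [h9]

lemma iota_Fh : iota.comp Fh = MonoidHom.id Heisenberg := by
  apply PresentedGroup.ext
  intro i
  fin_cases i
  · show iota (Fh Hx) = Hx
    rw [Fh_x]
    show Hx ^ (1:ℤ) * Hy ^ (0:ℤ) * Hlam ^ (0:ℤ) = Hx
    group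
  · show iota (Fh Hy) = Hy
    rw [Fh_y]
    show Hx ^ (0:ℤ) * Hy ^ (1:ℤ) * Hlam ^ (0:ℤ) = Hy
    group

lemma Fh_injective : Function.Injective Fh := by
  intro u v huv
  have h1 := DFunLike.congr_fun iota_Fh u
  have h2 := DFunLike.congr_fun iota_Fh v
  simp only [MonoidHom.comp_apply, MonoidHom.id_apply] at h1 h2
  rw [← h1, ← h2, huv]

/-! ### The center of the Heisenberg group -/

lemma center_eq : Subgroup.center Heisenberg = Subgroup.zpowers Hlam := by
  apply le_antisymm
  · intro z hz
    have hx : Fh z * MX = MX * Fh z := by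
      rw [← Fh_x, ← map_mul, ← map_mul, (Subgroup.mem_center_iff.mp hz Hx).symm]
    have hy : Fh z * MY = MY * Fh z := by
      rw [← Fh_y, ← map_mul, ← map_mul, (Subgroup.mem_center_iff.mp hz Hy).symm]
    have hb : (Fh z).b = 0 := by
      have := congrArg H3.c hx
      simp [MX] at this
      linarith
    have ha : (Fh z).a = 0 := by
      have := congrArg H3.c hy
      simp [MY] at this
      linarith
    have hz3 : Fh z = Fh (Hlam ^ (Fh z).c) := by
      rw [map_zpow, Fh_lam, ML_zpow]
      ext <;> simp [ha, hb]
    exact ⟨(Fh z).c, (Fh_injective hz3).symm⟩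
  · rw [Subgroup.zpowers_le]
    exact lam_mem_center

lemma commS_mem_zpowers (g h : Heisenberg) : commS g h ∈ Subgroup.zpowers Hlam := by
  have key : Fh (commS g h) = Fh (Hlam ^ (Fh (commS g h)).c) := by
    rw [map_zpow, Fh_lam, ML_zpow]
    rw [map_commS]
    ext <;> simp [commS] <;> ring
  exact ⟨(Fh (commS g h)).c, (Fh_injective key).symm⟩

lemma commS_mem_center (g h : Heisenberg) : commS g h ∈ Subgroup.center Heisenberg := by
  rw [center_eq]; exact commS_mem_zpowers g h

lemma commS_eq_one_of_center {G : Type*} [Group G] {z : G} (g : G)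
    (hz : z ∈ Subgroup.center G) : commS z g = 1 :=
  commS_eq_one_iff.mpr (Subgroup.mem_center_iff.mp hz g).symm

/-! ### Lifting endomorphisms through the presentation -/

lemma relsat (f : Fin 2 → Heisenberg) : ∀ r ∈ heisRels, FreeGroup.lift f r = 1 := by
  intro r hr
  rcases Set.mem_insert_iff.mp hr with rfl | hr
  · rw [map_commS, map_commS]
    simp only [FreeGroup.lift_apply_of]
    exact commS_eq_one_of_center _ (commS_mem_center _ _)
  · rw [Set.mem_singleton_iff.mp hr, map_commS, map_commS]
    simp only [FreeGroup.lift_apply_of]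
    exact commS_eq_one_of_center _ (commS_mem_center _ _)

/-- Any pair of images of the generators defines an endomorphism of the Heisenberg group. -/
def lift2 (f : Fin 2 → Heisenberg) : Heisenberg →* Heisenberg :=
  PresentedGroup.toGroup (relsat f)

lemma lift2_x (f : Fin 2 → Heisenberg) : lift2 f Hx = f 0 :=
  PresentedGroup.toGroup.of (relsat f)

lemma lift2_y (f : Fin 2 → Heisenberg) : lift2 f Hy = f 1 :=
  PresentedGroup.toGroup.of (relsat f)

lemma commS_mul_zpow (g h : Heisenberg) (m n : ℤ) :
    commS (g * Hlam ^ m) (h * Hlam ^ n) = commS g h := by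
  apply Fh_injective
  rw [map_commS, map_commS, map_mul, map_mul, map_zpow, map_zpow, Fh_lam, ML_zpow, ML_zpow]
  ext <;> simp [commS] <;> ring

lemma bijective_of_id_on_quotient (θ : Heisenberg →* Heisenberg)
    (h : ∀ g, (QuotientGroup.mk (θ g) : Heisenberg ⧸ Subgroup.center Heisenberg)
        = QuotientGroup.mk g) :
    Function.Bijective θ := by
  have hx0 : (θ Hx)⁻¹ * Hx ∈ Subgroup.zpowers Hlam := by
    rw [← center_eq]; exact QuotientGroup.eq.mp (h Hx)
  have hy0 : (θ Hy)⁻¹ * Hy ∈ Subgroup.zpowers Hlam := by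
    rw [← center_eq]; exact QuotientGroup.eq.mp (h Hy)
  obtain ⟨m, hm⟩ := hx0
  obtain ⟨n, hn⟩ := hy0
  have hm' : Hlam ^ m = (θ Hx)⁻¹ * Hx := hm
  have hn' : Hlam ^ n = (θ Hy)⁻¹ * Hy := hn
  have hx1 : θ Hx = Hx * Hlam ^ (-m) := by
    have h1 : θ Hx * Hlam ^ m = Hx := by rw [hm']; group
    have h2 := congrArg (fun w => w * Hlam ^ (-m)) h1
    simpa using h2
  have hy1 : θ Hy = Hy * Hlam ^ (-n) := by
    have h1 : θ Hy * Hlam ^ n = Hy := by rw [hn']; group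
    have h2 := congrArg (fun w => w * Hlam ^ (-n)) h1
    simpa using h2
  set θ' := lift2 ![Hx * Hlam ^ m, Hy * Hlam ^ n] with hθ'
  have hθ'x : θ' Hx = Hx * Hlam ^ m := by rw [hθ', lift2_x]; simp
  have hθ'y : θ' Hy = Hy * Hlam ^ n := by rw [hθ', lift2_y]; simp
  have hθlam : θ Hlam = Hlam := by
    rw [Hlam, map_commS, hx1, hy1, commS_mul_zpow]
  have hθ'lam : θ' Hlam = Hlam := by
    rw [Hlam, map_commS, hθ'x, hθ'y, commS_mul_zpow]
  have c1 : θ'.comp θ = MonoidHom.id Heisenberg := by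
    apply PresentedGroup.ext
    intro i
    fin_cases i
    · show θ' (θ Hx) = Hx
      rw [hx1, map_mul, map_zpow, hθ'lam, hθ'x]
      group
    · show θ' (θ Hy) = Hy
      rw [hy1, map_mul, map_zpow, hθ'lam, hθ'y]
      group
  have c2 : θ.comp θ' = MonoidHom.id Heisenberg := by
    apply PresentedGroup.ext
    intro i
    fin_cases i
    · show θ (θ' Hx) = Hx
      rw [hθ'x, map_mul, map_zpow, hθlam, hx1]
      group
    · show θ (θ' Hy) = Hy
      rw [hθ'y, map_mul, map_zpow, hθlam, hy1]
      group
  constructor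
  · intro u v huv
    have h1 := DFunLike.congr_fun c1 u
    have h2 := DFunLike.congr_fun c1 v
    simp only [MonoidHom.comp_apply, MonoidHom.id_apply] at h1 h2
    rw [← h1, ← h2, huv]
  · intro g
    refine ⟨θ' g, ?_⟩
    have h2 := DFunLike.congr_fun c2 g
    simpa only [MonoidHom.comp_apply, MonoidHom.id_apply] using h2

end HeisAux

theorem heisenberg_aut_to_aut_of_quotient_by_center_surjective
    (γ : MulAut (Heisenberg ⧸ Subgroup.center Heisenberg)) :
    ∃ φ : MulAut Heisenberg, ∀ g : Heisenberg,
      (QuotientGroup.mk (φ g) : Heisenberg ⧸ Subgroup.center Heisenberg) =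
        γ (QuotientGroup.mk g) := by
  obtain ⟨a, ha⟩ := QuotientGroup.mk_surjective (γ (QuotientGroup.mk Hx))
  obtain ⟨b, hb⟩ := QuotientGroup.mk_surjective (γ (QuotientGroup.mk Hy))
  obtain ⟨c, hc⟩ := QuotientGroup.mk_surjective (γ⁻¹ (QuotientGroup.mk Hx))
  obtain ⟨d, hd⟩ := QuotientGroup.mk_surjective (γ⁻¹ (QuotientGroup.mk Hy))
  set φ0 := HeisAux.lift2 ![a, b] with hφ0
  set ψ0 := HeisAux.lift2 ![c, d] with hψ0
  have hφ : ∀ g, (QuotientGroup.mk (φ0 g) : Heisenberg ⧸ Subgroup.center Heisenberg)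
      = γ (QuotientGroup.mk g) := by
    have key : (QuotientGroup.mk' (Subgroup.center Heisenberg)).comp φ0
        = (γ.toMonoidHom).comp (QuotientGroup.mk' (Subgroup.center Heisenberg)) := by
      apply PresentedGroup.ext
      intro i
      fin_cases i
      · show (QuotientGroup.mk (φ0 Hx) : Heisenberg ⧸ Subgroup.center Heisenberg)
            = γ (QuotientGroup.mk Hx)
        rw [hφ0, HeisAux.lift2_x]
        simpa using ha
      · show (QuotientGroup.mk (φ0 Hy) : Heisenberg ⧸ Subgroup.center Heisenberg)
            = γ (QuotientGroup.mk Hy)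
        rw [hφ0, HeisAux.lift2_y]
        simpa using hb
    intro g
    exact DFunLike.congr_fun key g
  have hψ : ∀ g, (QuotientGroup.mk (ψ0 g) : Heisenberg ⧸ Subgroup.center Heisenberg)
      = γ⁻¹ (QuotientGroup.mk g) := by
    have key : (QuotientGroup.mk' (Subgroup.center Heisenberg)).comp ψ0
        = ((γ⁻¹ : MulAut _).toMonoidHom).comp (QuotientGroup.mk' (Subgroup.center Heisenberg)) := by
      apply PresentedGroup.ext
      intro i
      fin_cases i
      · show (QuotientGroup.mk (ψ0 Hx) : Heisenberg ⧸ Subgroup.center Heisenberg)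
            = γ⁻¹ (QuotientGroup.mk Hx)
        rw [hψ0, HeisAux.lift2_x]
        simpa using hc
      · show (QuotientGroup.mk (ψ0 Hy) : Heisenberg ⧸ Subgroup.center Heisenberg)
            = γ⁻¹ (QuotientGroup.mk Hy)
        rw [hψ0, HeisAux.lift2_y]
        simpa using hd
    intro g
    exact DFunLike.congr_fun key g
  have hcomp1 : ∀ g, (QuotientGroup.mk ((ψ0.comp φ0) g)
      : Heisenberg ⧸ Subgroup.center Heisenberg) = QuotientGroup.mk g := by
    intro g
    rw [MonoidHom.comp_apply, hψ, hφ]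
    simp
  have hcomp2 : ∀ g, (QuotientGroup.mk ((φ0.comp ψ0) g)
      : Heisenberg ⧸ Subgroup.center Heisenberg) = QuotientGroup.mk g := by
    intro g
    rw [MonoidHom.comp_apply, hφ, hψ]
    simp
  have b1 := HeisAux.bijective_of_id_on_quotient _ hcomp1
  have b2 := HeisAux.bijective_of_id_on_quotient _ hcomp2
  have bφ : Function.Bijective φ0 := by
    constructor
    · intro u v huv
      exact b1.1 (by simp only [MonoidHom.comp_apply, huv])
    · intro g
      obtain ⟨w, hw⟩ := b2.2 g
      exact ⟨ψ0 w, hw⟩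
  exact ⟨MulEquiv.ofBijective φ0 bφ, fun g => hφ g⟩
end

section
/- For all integers m, n, each of the following four assignments extends to an involution ⋆ on the Heisenberg group Γ: (I) x⋆ = λ^m·x and y⋆ = λ^n·y; (II) x⋆ = x⁻¹ and y⋆ = y⁻¹; (III) x⋆ = x and y⋆ = λ^m·y⁻¹; (IV) x⋆ = λ^m·y and y⋆ = λ^{−m}·x. That is, in each case there exists a map ⋆ : Γ → Γ with (gh)⋆ = h⋆g⋆ and g⋆⋆ = g for all g, h ∈ Γ, taking the prescribed values on x and y. -/
lemma map_commS {G H : Type*} [Group G] [Group H] (φ : G →* H) (a b : G) :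
    φ (commS a b) = commS (φ a) (φ b) := by simp [commS]

lemma commS_eq_one_of_commute {G : Type*} [Group G] {a b : G} (h : Commute a b) :
    commS a b = 1 := by
  unfold commS
  rw [mul_assoc, mul_assoc, h.eq]
  simp [mul_assoc]

lemma commute_of_commS_eq_one {G : Type*} [Group G] {a b : G} (h : commS a b = 1) :
    Commute a b := by
  unfold commS at h
  have : a * b = b * a * (a⁻¹ * b⁻¹ * a * b) := by simp [mul_assoc]
  rw [h, mul_one] at this
  exact this

lemma rel_one : ∀ r ∈ heisRels, PresentedGroup.mk heisRels r = 1 := fun r hr =>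
  (QuotientGroup.eq_one_iff _).mpr (Subgroup.subset_normalClosure hr)

lemma comm_lam_x : Commute Hlam Hx := by
  apply commute_of_commS_eq_one
  have := rel_one _ (Set.mem_insert _ _)
  rw [map_commS, map_commS] at this
  exact this

lemma comm_lam_y : Commute Hlam Hy := by
  apply commute_of_commS_eq_one
  have := rel_one _ (Set.mem_insert_of_mem _ rfl)
  rw [map_commS, map_commS] at this
  exact this

lemma central : ∀ g : Heisenberg, Commute Hlam g := by
  intro g
  have h : g ∈ Subgroup.centralizer {Hlam} := by
    apply PresentedGroup.generated_by
    intro j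
    rw [Subgroup.mem_centralizer_iff]
    rintro h rfl
    fin_cases j
    · exact comm_lam_x
    · exact comm_lam_y
  exact (Subgroup.mem_centralizer_iff.mp h Hlam rfl)

lemma hxy : commS Hx Hy = Hlam := rfl

lemma key : Hx * Hy = Hy * Hx * Hlam := by
  rw [← hxy]; simp [commS, mul_assoc]

lemma hA : Hx * Hy * Hx⁻¹ * Hy⁻¹ = Hlam := by
  rw [key]
  rw [mul_assoc (Hy*Hx) Hlam Hx⁻¹, (central Hx⁻¹).eq]
  simp [mul_assoc, (central Hy⁻¹).eq]

lemma hB : Hy * Hx * Hy⁻¹ * Hx⁻¹ = Hlam⁻¹ := by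
  rw [← hA]; group

lemma hD : Hy⁻¹ * Hx * Hy * Hx⁻¹ = Hlam := by
  have k := key
  have : Hy⁻¹ * (Hx * Hy) * Hx⁻¹ = Hy⁻¹ * (Hy * Hx * Hlam) * Hx⁻¹ := by rw [k]
  calc Hy⁻¹ * Hx * Hy * Hx⁻¹ = Hy⁻¹ * (Hx * Hy) * Hx⁻¹ := by group
    _ = Hy⁻¹ * (Hy * Hx * Hlam) * Hx⁻¹ := this
    _ = Hx * Hlam * Hx⁻¹ := by group
    _ = Hlam := by rw [mul_assoc, (central Hx⁻¹).eq]; group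

lemma hC : Hx * Hy⁻¹ * Hx⁻¹ * Hy = Hlam⁻¹ := by
  rw [← hD]; group

lemma build (f : Fin 2 → Heisenberg)
    (hcen : ∀ g : Heisenberg, Commute (commS (f 0) (f 1)) g) :
    ∃ ψ : Heisenberg →* Heisenberg, ψ Hx = f 0 ∧ ψ Hy = f 1 ∧ ψ Hlam = commS (f 0) (f 1) := by
  have hrel : ∀ r ∈ heisRels, FreeGroup.lift f r = 1 := by
    rintro r (rfl | hr)
    · rw [map_commS, map_commS, FreeGroup.lift_apply_of, FreeGroup.lift_apply_of]
      exact commS_eq_one_of_commute (hcen _)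
    · rw [Set.mem_singleton_iff] at hr; subst hr
      rw [map_commS, map_commS, FreeGroup.lift_apply_of, FreeGroup.lift_apply_of]
      exact commS_eq_one_of_commute (hcen _)
  refine ⟨PresentedGroup.toGroup hrel, ?_, ?_, ?_⟩
  · exact PresentedGroup.toGroup.of hrel
  · exact PresentedGroup.toGroup.of hrel
  · rw [show Hlam = commS Hx Hy from rfl, map_commS,
      show Hx = PresentedGroup.of 0 from rfl, show Hy = PresentedGroup.of 1 from rfl,
      PresentedGroup.toGroup.of hrel, PresentedGroup.toGroup.of hrel]

lemma psi_invol (ψ : Heisenberg →* Heisenberg) (h0 : ψ (ψ Hx) = Hx) (h1 : ψ (ψ Hy) = Hy) :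
    ∀ g, ψ (ψ g) = g := by
  have h : ψ.comp ψ = MonoidHom.id _ := by
    apply PresentedGroup.ext
    intro i
    fin_cases i
    · simpa [Hx] using h0
    · simpa [Hy] using h1
  intro g
  simpa using DFunLike.congr_fun h g

lemma star_of_psi (ψ : Heisenberg →* Heisenberg) (h2 : ∀ g, ψ (ψ g) = g) :
    ∃ star : Heisenberg → Heisenberg,
      (∀ g h, star (g * h) = star h * star g) ∧ (∀ g, star (star g) = g) ∧
      star Hx = (ψ Hx)⁻¹ ∧ star Hy = (ψ Hy)⁻¹ := by
  refine ⟨fun g => ψ g⁻¹, fun g h => by simp [map_mul], fun g => by simp [h2], by simp, by simp⟩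

lemma inv_central_mul (k : ℤ) (g : Heisenberg) : (Hlam ^ k * g)⁻¹ = Hlam ^ (-k) * g⁻¹ := by
  rw [mul_inv_rev, ← zpow_neg]
  exact (((central g⁻¹).zpow_left (-k)).eq).symm

lemma commS_central_shift (z w a b : Heisenberg) (hz : ∀ g, Commute z g) (hw : ∀ g, Commute w g) :
    commS (z * a) (w * b) = commS a b := by
  have r1 : ∀ t : Heisenberg, b⁻¹ * (z * t) = z * (b⁻¹ * t) := fun t => by
    rw [← mul_assoc, ← mul_assoc, (hz b⁻¹).symm.eq]
  have r2 : ∀ t : Heisenberg, w⁻¹ * (z * t) = z * (w⁻¹ * t) := fun t => by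
    rw [← mul_assoc, ← mul_assoc, (hz w⁻¹).symm.eq]
  have r3 : ∀ t : Heisenberg, a * (w * t) = w * (a * t) := fun t => by
    rw [← mul_assoc, ← mul_assoc, (hw a).eq]
  simp only [commS, mul_inv_rev, mul_assoc, r1, r2, r3, inv_mul_cancel_left]

lemma cc1 (k : ℤ) (g : Heisenberg) : Hlam ^ k * (Hlam ^ k * g)⁻¹ = g⁻¹ := by
  rw [((central ((Hlam ^ k * g)⁻¹)).zpow_left k).eq]
  group

lemma case1_comm (m n : ℤ) :
    commS ((Hlam ^ m * Hx)⁻¹) ((Hlam ^ n * Hy)⁻¹) = Hlam := by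
  rw [inv_central_mul, inv_central_mul,
    commS_central_shift _ _ _ _ (fun g => (central g).zpow_left _) (fun g => (central g).zpow_left _)]
  show (Hx⁻¹)⁻¹ * (Hy⁻¹)⁻¹ * Hx⁻¹ * Hy⁻¹ = Hlam
  rw [inv_inv, inv_inv]
  exact hA

lemma case1 (m n : ℤ) : ∃ star : Heisenberg → Heisenberg,
    (∀ g h : Heisenberg, star (g * h) = star h * star g) ∧
    (∀ g : Heisenberg, star (star g) = g) ∧
    star Hx = Hlam ^ m * Hx ∧ star Hy = Hlam ^ n * Hy := by
  have hcomm : commS ((Hlam ^ m * Hx)⁻¹) ((Hlam ^ n * Hy)⁻¹) = Hlam := case1_comm m n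
  obtain ⟨ψ, hψx, hψy, hψc⟩ := build ![(Hlam ^ m * Hx)⁻¹, (Hlam ^ n * Hy)⁻¹]
    (by intro g
        simp only [Matrix.cons_val_zero, Matrix.cons_val_one, Matrix.head_cons, hcomm]
        exact central g)
  simp only [Matrix.cons_val_zero, Matrix.cons_val_one, Matrix.head_cons] at hψx hψy hψc
  rw [hcomm] at hψc
  have h0 : ψ (ψ Hx) = Hx := by
    rw [hψx, map_inv, map_mul, map_zpow, hψc, hψx, cc1, inv_inv]
  have h1 : ψ (ψ Hy) = Hy := by
    rw [hψy, map_inv, map_mul, map_zpow, hψc, hψy, cc1, inv_inv]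
  obtain ⟨star, hs1, hs2, hs3, hs4⟩ := star_of_psi ψ (psi_invol ψ h0 h1)
  exact ⟨star, hs1, hs2, by rw [hs3, hψx, inv_inv], by rw [hs4, hψy, inv_inv]⟩

lemma commS_central_shift_right (w a b : Heisenberg) (hw : ∀ g, Commute w g) :
    commS a (w * b) = commS a b := by
  have := commS_central_shift 1 w a b (fun g => Commute.one_left g) hw
  rwa [one_mul] at this

lemma case2 : ∃ star : Heisenberg → Heisenberg,
    (∀ g h : Heisenberg, star (g * h) = star h * star g) ∧
    (∀ g : Heisenberg, star (star g) = g) ∧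
    star Hx = Hx⁻¹ ∧ star Hy = Hy⁻¹ := by
  obtain ⟨ψ, hψx, hψy, hψc⟩ := build ![Hx, Hy]
    (by intro g
        simp only [Matrix.cons_val_zero, Matrix.cons_val_one, Matrix.head_cons]
        exact central g)
  simp only [Matrix.cons_val_zero, Matrix.cons_val_one, Matrix.head_cons] at hψx hψy
  have h0 : ψ (ψ Hx) = Hx := by rw [hψx, hψx]
  have h1 : ψ (ψ Hy) = Hy := by rw [hψy, hψy]
  obtain ⟨star, hs1, hs2, hs3, hs4⟩ := star_of_psi ψ (psi_invol ψ h0 h1)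
  exact ⟨star, hs1, hs2, by rw [hs3, hψx], by rw [hs4, hψy]⟩

lemma case3_comm (m : ℤ) : commS (Hx⁻¹) ((Hlam ^ m * Hy⁻¹)⁻¹) = Hlam⁻¹ := by
  rw [inv_central_mul, inv_inv,
    commS_central_shift_right _ _ _ (fun g => (central g).zpow_left _)]
  show (Hx⁻¹)⁻¹ * Hy⁻¹ * Hx⁻¹ * Hy = Hlam⁻¹
  rw [inv_inv]
  exact hC

lemma case3 (m : ℤ) : ∃ star : Heisenberg → Heisenberg,
    (∀ g h : Heisenberg, star (g * h) = star h * star g) ∧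
    (∀ g : Heisenberg, star (star g) = g) ∧
    star Hx = Hx ∧ star Hy = Hlam ^ m * Hy⁻¹ := by
  have hcomm := case3_comm m
  obtain ⟨ψ, hψx, hψy, hψc⟩ := build ![Hx⁻¹, (Hlam ^ m * Hy⁻¹)⁻¹]
    (by intro g
        simp only [Matrix.cons_val_zero, Matrix.cons_val_one, Matrix.head_cons, hcomm]
        exact (central g).inv_left)
  simp only [Matrix.cons_val_zero, Matrix.cons_val_one, Matrix.head_cons] at hψx hψy hψc
  rw [hcomm] at hψc
  have h0 : ψ (ψ Hx) = Hx := by rw [hψx, map_inv, hψx, inv_inv]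
  have h1 : ψ (ψ Hy) = Hy := by
    rw [hψy, map_inv, map_mul, map_zpow, map_inv, hψc, hψy]
    group
  obtain ⟨star, hs1, hs2, hs3, hs4⟩ := star_of_psi ψ (psi_invol ψ h0 h1)
  exact ⟨star, hs1, hs2, by rw [hs3, hψx, inv_inv], by rw [hs4, hψy, inv_inv]⟩

lemma case4_comm (m : ℤ) :
    commS ((Hlam ^ m * Hy)⁻¹) ((Hlam ^ (-m) * Hx)⁻¹) = Hlam⁻¹ := by
  rw [inv_central_mul, inv_central_mul,
    commS_central_shift _ _ _ _ (fun g => (central g).zpow_left _) (fun g => (central g).zpow_left _)]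
  show (Hy⁻¹)⁻¹ * (Hx⁻¹)⁻¹ * Hy⁻¹ * Hx⁻¹ = Hlam⁻¹
  rw [inv_inv, inv_inv]
  exact hB

lemma case4 (m : ℤ) : ∃ star : Heisenberg → Heisenberg,
    (∀ g h : Heisenberg, star (g * h) = star h * star g) ∧
    (∀ g : Heisenberg, star (star g) = g) ∧
    star Hx = Hlam ^ m * Hy ∧ star Hy = Hlam ^ (-m) * Hx := by
  have hcomm := case4_comm m
  obtain ⟨ψ, hψx, hψy, hψc⟩ := build ![(Hlam ^ m * Hy)⁻¹, (Hlam ^ (-m) * Hx)⁻¹]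
    (by intro g
        simp only [Matrix.cons_val_zero, Matrix.cons_val_one, Matrix.head_cons, hcomm]
        exact (central g).inv_left)
  simp only [Matrix.cons_val_zero, Matrix.cons_val_one, Matrix.head_cons] at hψx hψy hψc
  rw [hcomm] at hψc
  have h0 : ψ (ψ Hx) = Hx := by
    rw [hψx, map_inv, map_mul, map_zpow, hψc, hψy, inv_zpow, ← zpow_neg, cc1, inv_inv]
  have h1 : ψ (ψ Hy) = Hy := by
    rw [hψy, map_inv, map_mul, map_zpow, hψc, hψx, inv_zpow, ← zpow_neg, neg_neg, cc1, inv_inv]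
  obtain ⟨star, hs1, hs2, hs3, hs4⟩ := star_of_psi ψ (psi_invol ψ h0 h1)
  exact ⟨star, hs1, hs2, by rw [hs3, hψx, inv_inv], by rw [hs4, hψy, inv_inv]⟩

theorem heisenberg_involutions_of_four_types_exist (m n : ℤ) :
    (∃ star : Heisenberg → Heisenberg,
      (∀ g h : Heisenberg, star (g * h) = star h * star g) ∧
      (∀ g : Heisenberg, star (star g) = g) ∧
      star Hx = Hlam ^ m * Hx ∧ star Hy = Hlam ^ n * Hy) ∧
    (∃ star : Heisenberg → Heisenberg,
      (∀ g h : Heisenberg, star (g * h) = star h * star g) ∧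
      (∀ g : Heisenberg, star (star g) = g) ∧
      star Hx = Hx⁻¹ ∧ star Hy = Hy⁻¹) ∧
    (∃ star : Heisenberg → Heisenberg,
      (∀ g h : Heisenberg, star (g * h) = star h * star g) ∧
      (∀ g : Heisenberg, star (star g) = g) ∧
      star Hx = Hx ∧ star Hy = Hlam ^ m * Hy⁻¹) ∧
    (∃ star : Heisenberg → Heisenberg,
      (∀ g h : Heisenberg, star (g * h) = star h * star g) ∧
      (∀ g : Heisenberg, star (star g) = g) ∧
      star Hx = Hlam ^ m * Hy ∧ star Hy = Hlam ^ (-m) * Hx) :=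
  ⟨case1 m n, case2, case3 m, case4 m⟩
end
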